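/- Let φ: G → H be a graph homomorphism, A ⊆ E(G) a φ-stable set, and let I be either the invariant I_A or I_{A,u} for some vertex u of H. If P and P' are homotopic walks in G, then I(P) = I(P'). -/

import Mathlib

namespace Discrete

variable {V : Type*} {W : Type*}

/-- `IsWalk G l` : the nonempty list `l` of vertices forms a walk in `G`. -/
def IsWalk (G : SimpleGraph V) : List V → Prop
  | [] => False
  | [_] => True
  | a :: b :: l => G.Adj a b ∧ IsWalk G (b :: l)

/-- One elementary homotopy step: substitution, insertion, or deletion. -/
inductive Step (G : SimpleGraph V) : List V → List V → Prop
  | sub (p q : List V) (a b c b' : V) (h1 : G.Adj a b') (h2 : G.Adj b' c) :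
      Step G (p ++ a :: b :: c :: q) (p ++ a :: b' :: c :: q)
  | ins (p q : List V) (a w : V) (h : G.Adj a w) :
      Step G (p ++ a :: q) (p ++ a :: w :: a :: q)
  | del (p q : List V) (a w : V) :
      Step G (p ++ a :: w :: a :: q) (p ++ a :: q)

/-- Two walks are homotopic if one may be transformed into the other via a
finite sequence of substitution, insertion and deletion steps. -/
def Homotopic (G : SimpleGraph V) : List V → List V → Prop :=
  Relation.ReflTransGen (Step G)

/-- The multiset of edges of a walk, counted with multiplicity. -/
def walkEdges (l : List V) : Multiset (Sym2 V) :=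
  ↑((l.zip l.tail).map (Function.uncurry Sym2.mk))

/-- A closed walk: a walk whose endpoints coincide. -/
def IsClosedWalk (G : SimpleGraph V) (l : List V) : Prop :=
  IsWalk G l ∧ l.head? = l.getLast?

/-- A closed walk based at `v0`. -/
def IsClosedWalkAt (G : SimpleGraph V) (v0 : V) (l : List V) : Prop :=
  IsWalk G l ∧ l.head? = some v0 ∧ l.getLast? = some v0

/-- A cycle, recorded as a closed walk `v0 v1 ... v_{k-1} v0` of length at
least 3 whose vertices `v0, ..., v_{k-1}` are distinct. -/
def IsCycleList (G : SimpleGraph V) (l : List V) : Prop :=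
  IsClosedWalk G l ∧ l.dropLast.Nodup ∧ 4 ≤ l.length

/-- `G` is simply connected: any two walks with the same endpoints and lengths
of the same parity are homotopic. -/
def SimplyConnected (G : SimpleGraph V) : Prop :=
  G.Connected ∧ ∀ P P' : List V, IsWalk G P → IsWalk G P' →
    P.head? = P'.head? → P.getLast? = P'.getLast? →
    (P.length - 1) % 2 = (P'.length - 1) % 2 → Homotopic G P P'

/-- Two edges of `H` lie in a common 4-cycle of `H`. -/
def InCommonC4 (H : SimpleGraph W) (e f : Sym2 W) : Prop :=
  ∃ a b c d : W, a ≠ b ∧ a ≠ c ∧ a ≠ d ∧ b ≠ c ∧ b ≠ d ∧ c ≠ d ∧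
    H.Adj a b ∧ H.Adj b c ∧ H.Adj c d ∧ H.Adj d a ∧
    (e = s(a, b) ∨ e = s(b, c) ∨ e = s(c, d) ∨ e = s(d, a)) ∧
    (f = s(a, b) ∨ f = s(b, c) ∨ f = s(c, d) ∨ f = s(d, a))

/-- The equivalence relation on `E(H)` generated by lying in a common `C4`;
`C4Equiv H e f` says `f` lies in the `C4`-closure of `e`. -/
def C4Equiv (H : SimpleGraph W) : Sym2 W → Sym2 W → Prop :=
  Relation.EqvGen (InCommonC4 H)

/-- Two edges share an endpoint. -/
def Touch (e f : Sym2 V) : Prop := ∃ v, v ∈ e ∧ v ∈ f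

/-- `[e]_φ`: the edge set of the connected component containing `e` of the
subgraph of `G` induced by the edge set `φ⁻¹(C4-closure of φ(e))`. -/
def PhiClass {G : SimpleGraph V} {H : SimpleGraph W} (φ : G →g H) (e : Sym2 V) :
    Set (Sym2 V) :=
  {e' | Relation.ReflTransGen (fun a b =>
      a ∈ G.edgeSet ∧ b ∈ G.edgeSet ∧
      C4Equiv H (Sym2.map φ a) (Sym2.map φ e) ∧
      C4Equiv H (Sym2.map φ b) (Sym2.map φ e) ∧ Touch a b) e e'}

/-- `A ⊆ E(G)` is `φ`-stable if it is a union of classes `[e]_φ`. -/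
def PhiStable {G : SimpleGraph V} {H : SimpleGraph W} (φ : G →g H)
    (A : Set (Sym2 V)) : Prop :=
  A ⊆ G.edgeSet ∧ ∀ e ∈ A, PhiClass φ e ⊆ A

/-- `A_u`: the edges of `A` having an endpoint in `φ⁻¹(u)`. -/
def Au {G : SimpleGraph V} {H : SimpleGraph W} (φ : G →g H)
    (A : Set (Sym2 V)) (u : W) : Set (Sym2 V) :=
  {e ∈ A | ∃ v ∈ e, φ v = u}

open Classical in
/-- The intersection invariant `|F ∩ A| mod 2` of a multiset of edges. -/
noncomputable def inv2 (A : Set (Sym2 V)) (F : Multiset (Sym2 V)) : ℕ :=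
  (F.filter (· ∈ A)).card % 2

/-- Concatenation of closed walks. -/
def catWalk (l l' : List V) : List V := l ++ l'.tail

/-- `n`-fold concatenation power of a closed walk based at `v0`. -/
def powWalk (v0 : V) (l : List V) : ℕ → List V
  | 0 => [v0]
  | n + 1 => catWalk l (powWalk v0 l n)

/-- The discrete fundamental group `π₁(G)` is cyclic: some closed walk `P`
based at a vertex `v0` has the property that every closed walk based at `v0`
is homotopic to a power of `P` or of its reverse. -/
def CyclicPi1 (G : SimpleGraph V) : Prop :=
  G.Connected ∧ ∃ (v0 : V) (P : List V), IsClosedWalkAt G v0 P ∧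
    ∀ Q : List V, IsClosedWalkAt G v0 Q →
      ∃ n : ℕ, Homotopic G Q (powWalk v0 P n) ∨ Homotopic G Q (powWalk v0 P.reverse n)

/-- `H` contains no cycle of length `n`. -/
def CFree (H : SimpleGraph V) (n : ℕ) : Prop :=
  ∀ (v : V) (c : H.Walk v v), c.IsCycle → c.length ≠ n


/-! ### Auxiliary lemmas -/

section Aux

variable {G : SimpleGraph V} {H : SimpleGraph W}

lemma walkEdges_cons_cons (a b : V) (l : List V) :
    walkEdges (a :: b :: l) = s(a, b) ::ₘ walkEdges (b :: l) := by
  simp [walkEdges]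

lemma walkEdges_append (p : List V) (x : V) (q : List V) :
    walkEdges (p ++ x :: q) = walkEdges (p ++ [x]) + walkEdges (x :: q) := by
  induction p with
  | nil => simp [walkEdges]
  | cons y p ih =>
    cases p with
    | nil => simp [walkEdges_cons_cons, walkEdges]
    | cons z p' =>
      simp only [List.cons_append] at ih ⊢
      rw [walkEdges_cons_cons, walkEdges_cons_cons, ih]
      simp [Multiset.cons_add]

lemma isWalk_tail {y : V} {m : List V} (h : IsWalk G (y :: m)) (hm : m ≠ []) :
    IsWalk G m := by
  cases m with
  | nil => exact absurd rfl hm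
  | cons z l => exact h.2

lemma isWalk_suffix : ∀ (p : List V) {l : List V}, l ≠ [] → IsWalk G (p ++ l) → IsWalk G l := by
  intro p
  induction p with
  | nil => intro l _ h; exact h
  | cons y p ih =>
    intro l hl h
    apply ih hl
    apply isWalk_tail h
    intro hc
    rcases List.append_eq_nil_iff.mp hc with ⟨_, h2⟩
    exact hl h2

lemma isWalk_append_iff (p : List V) (a : V) (l : List V) :
    IsWalk G (p ++ a :: l) ↔ IsWalk G (p ++ [a]) ∧ IsWalk G (a :: l) := by
  induction p with
  | nil =>
    constructor
    · intro h; exact ⟨trivial, h⟩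
    · intro h; exact h.2
  | cons y p ih =>
    cases p with
    | nil =>
      cases l with
      | nil =>
        constructor
        · intro h; exact ⟨h, trivial⟩
        · intro h; exact h.1
      | cons z l' =>
        constructor
        · intro h; exact ⟨⟨h.1, trivial⟩, h.2⟩
        · intro h; exact ⟨h.1.1, h.2⟩
    | cons z p' =>
      constructor
      · intro h
        have h' : G.Adj y z ∧ IsWalk G ((z :: p') ++ a :: l) := h
        obtain ⟨hadj, hw⟩ := h'
        rw [ih] at hw
        exact ⟨⟨hadj, hw.1⟩, hw.2⟩
      · rintro ⟨h1, h2⟩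
        have h1' : G.Adj y z ∧ IsWalk G ((z :: p') ++ [a]) := h1
        show G.Adj y z ∧ IsWalk G ((z :: p') ++ a :: l)
        exact ⟨h1'.1, ih.mpr ⟨h1'.2, h2⟩⟩

lemma touch_symm {e f : Sym2 V} (h : Touch e f) : Touch f e := by
  obtain ⟨v, h1, h2⟩ := h; exact ⟨v, h2, h1⟩

/-- One-step membership in the class. -/
lemma mem_phiClass_single (φ : G →g H) {e e' : Sym2 V}
    (he : e ∈ G.edgeSet) (he' : e' ∈ G.edgeSet) (ht : Touch e e')
    (hc : C4Equiv H (Sym2.map φ e') (Sym2.map φ e)) : e' ∈ PhiClass φ e :=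
  Relation.ReflTransGen.single ⟨he, he', Relation.EqvGen.refl _, hc, ht⟩

lemma stable_pair_iff {φ : G →g H} {A : Set (Sym2 V)} (hA : PhiStable φ A)
    {e f : Sym2 V} (he : e ∈ G.edgeSet) (hf : f ∈ G.edgeSet) (ht : Touch e f)
    (hc : C4Equiv H (Sym2.map φ e) (Sym2.map φ f)) : e ∈ A ↔ f ∈ A := by
  constructor
  · intro h
    exact hA.2 e h (mem_phiClass_single φ he hf ht (Relation.EqvGen.symm _ _ hc))
  · intro h
    exact hA.2 f h (mem_phiClass_single φ hf he (touch_symm ht) hc)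

lemma mem_Au_pair {φ : G →g H} {A : Set (Sym2 V)} {u : W} (x y : V) :
    s(x, y) ∈ Au φ A u ↔ s(x, y) ∈ A ∧ (φ x = u ∨ φ y = u) := by
  simp [Au, Sym2.mem_iff]

open Classical in
/-- The key parity lemma, using φ-stability. -/
lemma pair_parity {φ : G →g H} {A : Set (Sym2 V)} (hA : PhiStable φ A)
    {a b c b' : V} (hab : G.Adj a b) (hbc : G.Adj b c)
    (hab' : G.Adj a b') (hb'c : G.Adj b' c)
    (B : Set (Sym2 V)) (hB : B = A ∨ ∃ u, B = Au φ A u) :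
    ((if s(a, b) ∈ B then 1 else 0) + (if s(b, c) ∈ B then 1 else 0)) % 2
      = ((if s(a, b') ∈ B then 1 else 0) + (if s(b', c) ∈ B then 1 else 0)) % 2 := by
  have he1 : s(a, b) ∈ G.edgeSet := hab
  have he2 : s(b, c) ∈ G.edgeSet := hbc
  have hf1 : s(a, b') ∈ G.edgeSet := hab'
  have hf2 : s(b', c) ∈ G.edgeSet := hb'c
  have m1 : Sym2.map φ s(a, b) = s(φ a, φ b) := Sym2.map_pair_eq φ a b
  have m2 : Sym2.map φ s(b, c) = s(φ b, φ c) := Sym2.map_pair_eq φ b c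
  have m3 : Sym2.map φ s(a, b') = s(φ a, φ b') := Sym2.map_pair_eq φ a b'
  have m4 : Sym2.map φ s(b', c) = s(φ b', φ c) := Sym2.map_pair_eq φ b' c
  have t_e1f1 : Touch s(a, b) s(a, b') := ⟨a, Sym2.mem_mk_left a b, Sym2.mem_mk_left a b'⟩
  have t_e2f2 : Touch s(b, c) s(b', c) := ⟨c, Sym2.mem_mk_right b c, Sym2.mem_mk_right b' c⟩
  have t_e1e2 : Touch s(a, b) s(b, c) := ⟨b, Sym2.mem_mk_right a b, Sym2.mem_mk_left b c⟩
  have t_f1f2 : Touch s(a, b') s(b', c) := ⟨b', Sym2.mem_mk_right a b', Sym2.mem_mk_left b' c⟩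
  by_cases hbb' : φ b = φ b'
  · -- images coincide pairwise
    have i1 : s(a, b) ∈ A ↔ s(a, b') ∈ A := by
      apply stable_pair_iff hA he1 hf1 t_e1f1
      rw [m1, m3, hbb']
      exact Relation.EqvGen.refl _
    have i2 : s(b, c) ∈ A ↔ s(b', c) ∈ A := by
      apply stable_pair_iff hA he2 hf2 t_e2f2
      rw [m2, m4, hbb']
      exact Relation.EqvGen.refl _
    rcases hB with rfl | ⟨u, rfl⟩
    · simp only [i1, i2]
    · simp only [mem_Au_pair, hbb', i1, i2]
  · by_cases hac : φ a = φ c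
    · -- each side pairs up
      have i1 : s(a, b) ∈ A ↔ s(b, c) ∈ A := by
        apply stable_pair_iff hA he1 he2 t_e1e2
        rw [m1, m2, hac, Sym2.eq_swap]
        exact Relation.EqvGen.refl _
      have i2 : s(a, b') ∈ A ↔ s(b', c) ∈ A := by
        apply stable_pair_iff hA hf1 hf2 t_f1f2
        rw [m3, m4, hac, Sym2.eq_swap]
        exact Relation.EqvGen.refl _
      rcases hB with rfl | ⟨u, rfl⟩
      · simp only [i1, i2]
        split_ifs <;> rfl
      · simp only [mem_Au_pair, i1, i2]
        have hor1 : (φ a = u ∨ φ b = u) ↔ (φ b = u ∨ φ c = u) := by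
          rw [hac]; tauto
        have hor2 : (φ a = u ∨ φ b' = u) ↔ (φ b' = u ∨ φ c = u) := by
          rw [hac]; tauto
        simp only [hor1, hor2]
        split_ifs <;> rfl
    · -- genuine C4 in H on (φa, φb, φc, φb')
      have nab : φ a ≠ φ b := (φ.map_adj hab).ne
      have nbc : φ b ≠ φ c := (φ.map_adj hbc).ne
      have nab' : φ a ≠ φ b' := (φ.map_adj hab').ne
      have nb'c : φ b' ≠ φ c := (φ.map_adj hb'c).ne
      have hcom : ∀ e f : Sym2 W,
          (e = s(φ a, φ b) ∨ e = s(φ b, φ c) ∨ e = s(φ c, φ b') ∨ e = s(φ b', φ a)) →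
          (f = s(φ a, φ b) ∨ f = s(φ b, φ c) ∨ f = s(φ c, φ b') ∨ f = s(φ b', φ a)) →
          C4Equiv H e f := by
        intro e f he hf
        exact Relation.EqvGen.rel _ _
          ⟨φ a, φ b, φ c, φ b', nab, hac, nab', nbc, hbb', nb'c.symm,
            φ.map_adj hab, φ.map_adj hbc, (φ.map_adj hb'c).symm, (φ.map_adj hab').symm,
            he, hf⟩
      have i12 : s(a, b) ∈ A ↔ s(b, c) ∈ A := by
        apply stable_pair_iff hA he1 he2 t_e1e2
        rw [m1, m2]
        exact hcom _ _ (Or.inl rfl) (Or.inr (Or.inl rfl))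
      have i13 : s(a, b) ∈ A ↔ s(a, b') ∈ A := by
        apply stable_pair_iff hA he1 hf1 t_e1f1
        rw [m1, m3]
        refine hcom _ _ (Or.inl rfl) (Or.inr (Or.inr (Or.inr ?_)))
        exact Sym2.eq_swap.symm
      have i34 : s(a, b') ∈ A ↔ s(b', c) ∈ A := by
        apply stable_pair_iff hA hf1 hf2 t_f1f2
        rw [m3, m4]
        refine hcom _ _ (Or.inr (Or.inr (Or.inr Sym2.eq_swap.symm)))
          (Or.inr (Or.inr (Or.inl Sym2.eq_swap.symm)))
      rcases hB with rfl | ⟨u, rfl⟩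
      · simp only [← i12, ← i34, i13]
      · by_cases hA1 : s(a, b) ∈ A
        · have hA2 : s(b, c) ∈ A := i12.mp hA1
          have hA3 : s(a, b') ∈ A := i13.mp hA1
          have hA4 : s(b', c) ∈ A := i34.mp hA3
          simp only [mem_Au_pair, hA1, hA2, hA3, hA4, true_and]
          by_cases pa : φ a = u <;> by_cases pb : φ b = u <;> by_cases pc : φ c = u <;>
            by_cases pb' : φ b' = u <;> simp_all
        · have hA2 : s(b, c) ∉ A := fun h => hA1 (i12.mpr h)
          have hA3 : s(a, b') ∉ A := fun h => hA1 (i13.mpr h)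
          have hA4 : s(b', c) ∉ A := fun h => hA3 (i34.mpr h)
          simp only [mem_Au_pair, hA1, hA2, hA3, hA4, false_and, if_false]

open Classical in
lemma inv2_congr_mid (B : Set (Sym2 V)) (X Y : Multiset (Sym2 V))
    (P1 P2 : Multiset (Sym2 V))
    (h : (P1.filter (· ∈ B)).card % 2 = (P2.filter (· ∈ B)).card % 2) :
    inv2 B (X + (P1 + Y)) = inv2 B (X + (P2 + Y)) := by
  simp only [inv2, Multiset.filter_add, Multiset.card_add]
  omega

lemma step_isWalk {P Q : List V} (hst : Step G P Q) (hP : IsWalk G P) : IsWalk G Q := by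
  cases hst with
  | sub p q a b c b' h1 h2 =>
    rw [isWalk_append_iff] at hP ⊢
    refine ⟨hP.1, h1, h2, ?_⟩
    exact hP.2.2.2
  | ins p q a w h =>
    rw [isWalk_append_iff] at hP ⊢
    exact ⟨hP.1, h, h.symm, hP.2⟩
  | del p q a w =>
    rw [isWalk_append_iff] at hP ⊢
    exact ⟨hP.1, hP.2.2.2⟩

open Classical in
lemma step_inv {φ : G →g H} {A : Set (Sym2 V)} (hA : PhiStable φ A)
    {P Q : List V} (hst : Step G P Q) (hP : IsWalk G P)
    (B : Set (Sym2 V)) (hB : B = A ∨ ∃ u, B = Au φ A u) :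
    inv2 B (walkEdges P) = inv2 B (walkEdges Q) := by
  cases hst with
  | sub p q a b c b' h1 h2 =>
    have hw : IsWalk G (a :: b :: c :: q) := isWalk_suffix p (by simp) hP
    have hab : G.Adj a b := hw.1
    have hbc : G.Adj b c := hw.2.1
    have e1 : walkEdges (p ++ a :: b :: c :: q)
        = walkEdges (p ++ [a]) + (({s(a, b), s(b, c)} : Multiset (Sym2 V)) + walkEdges (c :: q)) := by
      rw [walkEdges_append, walkEdges_cons_cons, walkEdges_cons_cons]
      simp [Multiset.cons_add]
    have e2 : walkEdges (p ++ a :: b' :: c :: q)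
        = walkEdges (p ++ [a]) + (({s(a, b'), s(b', c)} : Multiset (Sym2 V)) + walkEdges (c :: q)) := by
      rw [walkEdges_append, walkEdges_cons_cons, walkEdges_cons_cons]
      simp [Multiset.cons_add]
    rw [e1, e2]
    apply inv2_congr_mid
    have := pair_parity hA hab hbc h1 h2 B hB
    simp only [Multiset.insert_eq_cons, Multiset.filter_cons, Multiset.filter_singleton,
      Multiset.card_add]
    split_ifs <;> simp_all
  | ins p q a w h =>
    have e1 : walkEdges (p ++ a :: q)
        = walkEdges (p ++ [a]) + ((0 : Multiset (Sym2 V)) + walkEdges (a :: q)) := by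
      rw [walkEdges_append]; simp
    have e2 : walkEdges (p ++ a :: w :: a :: q)
        = walkEdges (p ++ [a]) + (({s(a, w), s(w, a)} : Multiset (Sym2 V)) + walkEdges (a :: q)) := by
      rw [walkEdges_append, walkEdges_cons_cons, walkEdges_cons_cons]
      simp [Multiset.cons_add]
    rw [e1, e2]
    apply inv2_congr_mid
    have hsw : s(w, a) = s(a, w) := Sym2.eq_swap
    simp only [hsw, Multiset.insert_eq_cons, Multiset.filter_cons, Multiset.filter_singleton]
    split_ifs <;> simp
  | del p q a w =>
    have e1 : walkEdges (p ++ a :: w :: a :: q)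
        = walkEdges (p ++ [a]) + (({s(a, w), s(w, a)} : Multiset (Sym2 V)) + walkEdges (a :: q)) := by
      rw [walkEdges_append, walkEdges_cons_cons, walkEdges_cons_cons]
      simp [Multiset.cons_add]
    have e2 : walkEdges (p ++ a :: q)
        = walkEdges (p ++ [a]) + ((0 : Multiset (Sym2 V)) + walkEdges (a :: q)) := by
      rw [walkEdges_append]; simp
    rw [e1, e2]
    apply inv2_congr_mid
    have hsw : s(w, a) = s(a, w) := Sym2.eq_swap
    simp only [hsw, Multiset.insert_eq_cons, Multiset.filter_cons, Multiset.filter_singleton]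
    split_ifs <;> simp

end Aux

/-- Intersection invariants are homotopy invariants. -/
theorem inv_homotopy_invariant (G : SimpleGraph V) (H : SimpleGraph W)
    (φ : G →g H) (A : Set (Sym2 V)) (hA : PhiStable φ A)
    (P P' : List V) (hP : IsWalk G P) (hP' : IsWalk G P')
    (h : Homotopic G P P') :
    inv2 A (walkEdges P) = inv2 A (walkEdges P') ∧
      ∀ u : W, inv2 (Au φ A u) (walkEdges P) = inv2 (Au φ A u) (walkEdges P') := by
  have key : ∀ Q : List V, Homotopic G P Q → IsWalk G Q ∧
      inv2 A (walkEdges P) = inv2 A (walkEdges Q) ∧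
      ∀ u : W, inv2 (Au φ A u) (walkEdges P) = inv2 (Au φ A u) (walkEdges Q) := by
    intro Q h
    induction h with
    | refl => exact ⟨hP, rfl, fun _ => rfl⟩
    | tail h1 hstep ih =>
      obtain ⟨hw, hi1, hi2⟩ := ih
      refine ⟨step_isWalk hstep hw, ?_, ?_⟩
      · rw [hi1]; exact step_inv hA hstep hw A (Or.inl rfl)
      · intro u
        rw [hi2 u]; exact step_inv hA hstep hw (Au φ A u) (Or.inr ⟨u, rfl⟩)
  exact ⟨(key P' h).2.1, (key P' h).2.2⟩

end Discrete
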